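/- Let φ be a CNF formula and let F̄_x, F̄_y be (t⁺,t⁻)-labeled signed subgraphs of F_φ on disjoint vertex sets, and let F̄_z = F̄_x ⊗_{g|f₁,f₂} F̄_y be their labeling composition with relabelings f₁^±, f₂^±, g^±. Let ν be a partial assignment on the variables of F_z, with restrictions ν_x, ν_y, and let Σ_x⁺ = span{lab_x⁺(w) : ν_x(w)=1}, Σ_x⁻ = span{lab_x⁻(w) : ν_x(w)=0}, and analogously Σ_y⁺, Σ_y⁻. Let Π_z⁺ ⊆ GF(2)^{t⁺} and Π_z⁻ ⊆ GF(2)^{t⁻} be arbitrary subspaces, and define Σ_z^± = f₁^±(Σ_x^±) + f₂^±(Σ_y^±), Π_x^± = (f₁^±)ᵀ(Π_z^±) + g^±(Σ_y^±), and Π_y^± = (f₂^±)ᵀ(Π_z^±) + (g^±)ᵀ(Σ_x^±), where the sum of two subspaces is their span and images are taken under the respective linear maps. Then ν is of shape (Σ_z⁺, Σ_z⁻, Π_z⁺, Π_z⁻) in F̄_z if and only if ν_x is of shape (Σ_x⁺, Σ_x⁻, Π_x⁺, Π_x⁻) in F̄_x and ν_y is of shape (Σ_y⁺, Σ_y⁻,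 Π_y⁺, Π_y⁻) in F̄_y. -/

import Mathlib

/-- Scalar product of binary vectors over GF(2). -/
def dotp {t : ℕ} (u v : Fin t → ZMod 2) : ZMod 2 := ∑ i, u i * v i

/-- The signed (bipartite) graph F_φ of a CNF formula φ with variable set `Var` and
clause set `Cl`:  `pos w c` means the literal w occurs in clause c (wc ∈ E⁺), and
`neg w c` means ¬w occurs in c (wc ∈ E⁻); the two edge sets are disjoint. -/
structure SignedBip (Var Cl : Type) where
  pos : Var → Cl → Prop
  neg : Var → Cl → Prop
  disj : ∀ w c, ¬ (pos w c ∧ neg w c)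

/-- The assignment ν satisfies the clause c. -/
def SignedBip.SatClause {Var Cl : Type} (F : SignedBip Var Cl) (ν : Var → Bool) (c : Cl) : Prop :=
  (∃ w, ν w = true ∧ F.pos w c) ∨ (∃ w, ν w = false ∧ F.neg w c)

/-- The assignment ν satisfies the formula φ (every clause of φ). -/
def SignedBip.Satisfies {Var Cl : Type} (F : SignedBip Var Cl) (ν : Var → Bool) : Prop :=
  ∀ c, F.SatClause ν c

/-- A (t⁺,t⁻)-labeled signed (sub)graph: vertex sets `VW ⊆ Var`, `VC ⊆ Cl`,
two edge relations, and labelings lab⁺, lab⁻ into GF(2)^{t⁺}, GF(2)^{t⁻}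
(given on variable vertices and clause vertices separately). -/
structure LabSub (Var Cl : Type) (tp tn : ℕ) where
  pos : Var → Cl → Prop
  neg : Var → Cl → Prop
  VW : Set Var
  VC : Set Cl
  labWp : Var → Fin tp → ZMod 2
  labCp : Cl → Fin tp → ZMod 2
  labWn : Var → Fin tn → ZMod 2
  labCn : Cl → Fin tn → ZMod 2

/-- F₁ is a signed subgraph of F_φ: its edges are edges of F_φ joining vertices of F₁. -/
def LabSub.SubgraphOf {Var Cl : Type} {tp tn : ℕ} (F₁ : LabSub Var Cl tp tn)
    (F : SignedBip Var Cl) : Prop :=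
  ∀ w c, (F₁.pos w c → F.pos w c ∧ w ∈ F₁.VW ∧ c ∈ F₁.VC) ∧
    (F₁.neg w c → F.neg w c ∧ w ∈ F₁.VW ∧ c ∈ F₁.VC)

/-- The partial assignment ν (restricted to the variables of F₁) is of shape
(Σ⁺, Σ⁻, Π⁺, Π⁻) in F̄₁:
(I) Σ⁺ is the span of the lab⁺-labels of the true variables of F₁ and Σ⁻ the span of the
lab⁻-labels of the false variables of F₁; and
(II) every clause vertex c of F₁ is adjacent in F₁⁺ to a true variable, or adjacent
in F₁⁻ to a false variable, or lab⁺(c) is non-orthogonal to Π⁺, or lab⁻(c) is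
non-orthogonal to Π⁻. -/
def LabSub.Shape {Var Cl : Type} {tp tn : ℕ} (F₁ : LabSub Var Cl tp tn) (ν : Var → Bool)
    (Sp : Submodule (ZMod 2) (Fin tp → ZMod 2)) (Sn : Submodule (ZMod 2) (Fin tn → ZMod 2))
    (Pp : Submodule (ZMod 2) (Fin tp → ZMod 2)) (Pn : Submodule (ZMod 2) (Fin tn → ZMod 2)) :
    Prop :=
  Sp = Submodule.span (ZMod 2) (F₁.labWp '' {w | w ∈ F₁.VW ∧ ν w = true}) ∧
  Sn = Submodule.span (ZMod 2) (F₁.labWn '' {w | w ∈ F₁.VW ∧ ν w = false}) ∧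
  ∀ c ∈ F₁.VC,
    (∃ w ∈ F₁.VW, ν w = true ∧ F₁.pos w c) ∨
    (∃ w ∈ F₁.VW, ν w = false ∧ F₁.neg w c) ∨
    (∃ v ∈ Pp, dotp (F₁.labCp c) v = 1) ∨
    (∃ v ∈ Pn, dotp (F₁.labCn c) v = 1)

open Classical in
/-- The labeling composition F̄_z = F̄_x ⊗_{g|f₁,f₂} F̄_y of two (t⁺,t⁻)-labeled signed
subgraphs on disjoint vertex sets, where the relabelings f₁^±, f₂^±, g^± are given by
binary matrices: positive edges are those of F_x⁺, those of F_y⁺, and all cross pairs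
{u,v}, u ∈ V(F_x), v ∈ V(F_y), with lab_x⁺(u)·g⁺(lab_y⁺(v)) = 1 (analogously for the
negative edges, using g⁻); the new labelings are lab_z^± = f₁^± ∘ lab_x^± on V(F_x) and
lab_z^± = f₂^± ∘ lab_y^± on V(F_y). -/
noncomputable def LabSub.compose {Var Cl : Type} {tp tn : ℕ}
    (Fx Fy : LabSub Var Cl tp tn)
    (f1p f2p gp : Matrix (Fin tp) (Fin tp) (ZMod 2))
    (f1n f2n gn : Matrix (Fin tn) (Fin tn) (ZMod 2)) : LabSub Var Cl tp tn where
  pos w c := Fx.pos w c ∨ Fy.pos w c ∨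
    (w ∈ Fx.VW ∧ c ∈ Fy.VC ∧ dotp (Fx.labWp w) (gp.mulVec (Fy.labCp c)) = 1) ∨
    (c ∈ Fx.VC ∧ w ∈ Fy.VW ∧ dotp (Fx.labCp c) (gp.mulVec (Fy.labWp w)) = 1)
  neg w c := Fx.neg w c ∨ Fy.neg w c ∨
    (w ∈ Fx.VW ∧ c ∈ Fy.VC ∧ dotp (Fx.labWn w) (gn.mulVec (Fy.labCn c)) = 1) ∨
    (c ∈ Fx.VC ∧ w ∈ Fy.VW ∧ dotp (Fx.labCn c) (gn.mulVec (Fy.labWn w)) = 1)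
  VW := Fx.VW ∪ Fy.VW
  VC := Fx.VC ∪ Fy.VC
  labWp w := if w ∈ Fx.VW then f1p.mulVec (Fx.labWp w) else f2p.mulVec (Fy.labWp w)
  labCp c := if c ∈ Fx.VC then f1p.mulVec (Fx.labCp c) else f2p.mulVec (Fy.labCp c)
  labWn w := if w ∈ Fx.VW then f1n.mulVec (Fx.labWn w) else f2n.mulVec (Fy.labWn w)
  labCn c := if c ∈ Fx.VC then f1n.mulVec (Fx.labCn c) else f2n.mulVec (Fy.labCn c)

lemma dotp_eq {t : ℕ} (u v : Fin t → ZMod 2) : dotp u v = dotProduct u v := rfl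

lemma dotp_comm {t : ℕ} (u v : Fin t → ZMod 2) : dotp u v = dotp v u := by
  simp [dotp_eq, dotProduct_comm]

lemma dotp_mulVec {t : ℕ} (M : Matrix (Fin t) (Fin t) (ZMod 2)) (u v : Fin t → ZMod 2) :
    dotp u (M.mulVec v) = dotp (M.transpose.mulVec u) v := by
  simp [dotp_eq, Matrix.dotProduct_mulVec, Matrix.mulVec_transpose]

lemma dotp_transpose_swap {t : ℕ} (M : Matrix (Fin t) (Fin t) (ZMod 2)) (u s : Fin t → ZMod 2) :
    dotp u (M.transpose.mulVec s) = dotp s (M.mulVec u) := by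
  rw [dotp_mulVec, Matrix.transpose_transpose, dotp_comm]

def dlin {t : ℕ} (u : Fin t → ZMod 2) : (Fin t → ZMod 2) →ₗ[ZMod 2] ZMod 2 where
  toFun v := dotp u v
  map_add' v w := by simp [dotp, mul_add, Finset.sum_add_distrib]
  map_smul' a v := by simp [dotp, Finset.mul_sum, mul_left_comm]

lemma exists_span {t : ℕ} (u : Fin t → ZMod 2) (T : Set (Fin t → ZMod 2)) :
    (∃ v ∈ Submodule.span (ZMod 2) T, dotp u v = 1) ↔ ∃ s ∈ T, dotp u s = 1 := by
  constructor
  · rintro ⟨v, hv, h1⟩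
    by_contra hc
    push_neg at hc
    have hT : T ⊆ LinearMap.ker (dlin u) := by
      intro s hs
      have := hc s hs
      have h2 : ∀ a : ZMod 2, a ≠ 1 → a = 0 := by decide
      exact LinearMap.mem_ker.mpr (h2 _ this)
    have := Submodule.span_le.mpr hT hv
    simp [dlin, LinearMap.mem_ker] at this
    rw [show dotp u v = 0 from this] at h1
    exact one_ne_zero h1.symm
  · rintro ⟨s, hs, h⟩
    exact ⟨s, Submodule.subset_span hs, h⟩

lemma exists_sup {t : ℕ} (u : Fin t → ZMod 2) (A B : Submodule (ZMod 2) (Fin t → ZMod 2)) :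
    (∃ v ∈ A ⊔ B, dotp u v = 1) ↔ (∃ v ∈ A, dotp u v = 1) ∨ (∃ v ∈ B, dotp u v = 1) := by
  have h : A ⊔ B = Submodule.span (ZMod 2) ((A : Set _) ∪ (B : Set _)) := by
    rw [Submodule.span_union, Submodule.span_eq, Submodule.span_eq]
  rw [h, exists_span]
  constructor
  · rintro ⟨s, hs | hs, h1⟩
    · exact Or.inl ⟨s, hs, h1⟩
    · exact Or.inr ⟨s, hs, h1⟩
  · rintro (⟨s, hs, h1⟩ | ⟨s, hs, h1⟩)
    · exact ⟨s, Or.inl hs, h1⟩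
    · exact ⟨s, Or.inr hs, h1⟩

lemma exists_map_span {t : ℕ} (u : Fin t → ZMod 2) (M : Matrix (Fin t) (Fin t) (ZMod 2))
    (T : Set (Fin t → ZMod 2)) :
    (∃ v ∈ Submodule.map M.mulVecLin (Submodule.span (ZMod 2) T), dotp u v = 1) ↔
    ∃ s ∈ T, dotp u (M.mulVec s) = 1 := by
  rw [← Submodule.span_image, exists_span]
  constructor
  · rintro ⟨s, ⟨t', ht', rfl⟩, h1⟩
    exact ⟨t', ht', by simpa [Matrix.mulVecLin_apply] using h1⟩
  · rintro ⟨s, hs, h1⟩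
    exact ⟨M.mulVecLin s, ⟨s, hs, rfl⟩, by simpa [Matrix.mulVecLin_apply] using h1⟩

lemma exists_map' {t : ℕ} (u : Fin t → ZMod 2) (M : Matrix (Fin t) (Fin t) (ZMod 2))
    (S : Submodule (ZMod 2) (Fin t → ZMod 2)) :
    (∃ v ∈ Submodule.map M.mulVecLin S, dotp u v = 1) ↔
    ∃ v ∈ S, dotp (M.transpose.mulVec u) v = 1 := by
  constructor
  · rintro ⟨_, ⟨v, hv, rfl⟩, h1⟩
    exact ⟨v, hv, by rwa [Matrix.mulVecLin_apply, dotp_mulVec] at h1⟩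
  · rintro ⟨v, hv, h1⟩
    exact ⟨M.mulVec v, ⟨v, hv, by simp [Matrix.mulVecLin_apply]⟩, by rwa [dotp_mulVec]⟩

open Classical in
lemma span_compose {α : Type} {t : ℕ} (VWx VWy : Set α) (hd : Disjoint VWx VWy)
    (lx ly : α → Fin t → ZMod 2) (M1 M2 : Matrix (Fin t) (Fin t) (ZMod 2))
    (P : α → Prop) :
    Submodule.span (ZMod 2) ((fun w => if w ∈ VWx then M1.mulVec (lx w) else M2.mulVec (ly w)) ''
      {w | w ∈ VWx ∪ VWy ∧ P w}) =
    Submodule.map M1.mulVecLin (Submodule.span (ZMod 2) (lx '' {w | w ∈ VWx ∧ P w})) ⊔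
    Submodule.map M2.mulVecLin (Submodule.span (ZMod 2) (ly '' {w | w ∈ VWy ∧ P w})) := by
  have hset : {w | w ∈ VWx ∪ VWy ∧ P w} = {w | w ∈ VWx ∧ P w} ∪ {w | w ∈ VWy ∧ P w} := by
    ext w; simp only [Set.mem_setOf_eq, Set.mem_union]; tauto
  rw [hset, Set.image_union]
  have h1 : (fun w => if w ∈ VWx then M1.mulVec (lx w) else M2.mulVec (ly w)) ''
      {w | w ∈ VWx ∧ P w} = M1.mulVecLin '' (lx '' {w | w ∈ VWx ∧ P w}) := by
    rw [← Set.image_comp]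
    apply Set.image_congr
    intro a ha
    simp [ha.1, Matrix.mulVecLin_apply]
  have h2 : (fun w => if w ∈ VWx then M1.mulVec (lx w) else M2.mulVec (ly w)) ''
      {w | w ∈ VWy ∧ P w} = M2.mulVecLin '' (ly '' {w | w ∈ VWy ∧ P w}) := by
    rw [← Set.image_comp]
    apply Set.image_congr
    intro a ha
    have : a ∉ VWx := fun h => (Set.disjoint_left.mp hd h) ha.1
    simp [this, Matrix.mulVecLin_apply]
  rw [h1, h2, Submodule.span_union, Submodule.span_image, Submodule.span_image]

set_option maxHeartbeats 1000000 in
/-- with Σ_x^±, Σ_y^± the spans determined by ν on F̄_x, F̄_y, with Π_z^±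
arbitrary subspaces, and with Σ_z^± = f₁^±(Σ_x^±) + f₂^±(Σ_y^±),
Π_x^± = (f₁^±)ᵀ(Π_z^±) + g^±(Σ_y^±), Π_y^± = (f₂^±)ᵀ(Π_z^±) + (g^±)ᵀ(Σ_x^±),
the assignment ν is of shape (Σ_z⁺, Σ_z⁻, Π_z⁺, Π_z⁻) in F̄_z = F̄_x ⊗_{g|f₁,f₂} F̄_y
iff ν_x is of shape (Σ_x⁺, Σ_x⁻, Π_x⁺, Π_x⁻) in F̄_x and ν_y is of shape
(Σ_y⁺, Σ_y⁻, Π_y⁺, Π_y⁻) in F̄_y. -/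
theorem statement_9 {Var Cl : Type} [Fintype Var] [Fintype Cl] {tp tn : ℕ}
    (F : SignedBip Var Cl) (Fx Fy : LabSub Var Cl tp tn)
    (hx : Fx.SubgraphOf F) (hy : Fy.SubgraphOf F)
    (hdW : Disjoint Fx.VW Fy.VW) (hdC : Disjoint Fx.VC Fy.VC)
    (f1p f2p gp : Matrix (Fin tp) (Fin tp) (ZMod 2))
    (f1n f2n gn : Matrix (Fin tn) (Fin tn) (ZMod 2))
    (ν : Var → Bool)
    (Sxp Syp Szp Pxp Pyp Pzp : Submodule (ZMod 2) (Fin tp → ZMod 2))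
    (Sxn Syn Szn Pxn Pyn Pzn : Submodule (ZMod 2) (Fin tn → ZMod 2))
    (hSxp : Sxp = Submodule.span (ZMod 2) (Fx.labWp '' {w | w ∈ Fx.VW ∧ ν w = true}))
    (hSxn : Sxn = Submodule.span (ZMod 2) (Fx.labWn '' {w | w ∈ Fx.VW ∧ ν w = false}))
    (hSyp : Syp = Submodule.span (ZMod 2) (Fy.labWp '' {w | w ∈ Fy.VW ∧ ν w = true}))
    (hSyn : Syn = Submodule.span (ZMod 2) (Fy.labWn '' {w | w ∈ Fy.VW ∧ ν w = false}))
    (hSzp : Szp = Submodule.map f1p.mulVecLin Sxp ⊔ Submodule.map f2p.mulVecLin Syp)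
    (hSzn : Szn = Submodule.map f1n.mulVecLin Sxn ⊔ Submodule.map f2n.mulVecLin Syn)
    (hPxp : Pxp = Submodule.map f1p.transpose.mulVecLin Pzp ⊔ Submodule.map gp.mulVecLin Syp)
    (hPxn : Pxn = Submodule.map f1n.transpose.mulVecLin Pzn ⊔ Submodule.map gn.mulVecLin Syn)
    (hPyp : Pyp = Submodule.map f2p.transpose.mulVecLin Pzp ⊔
      Submodule.map gp.transpose.mulVecLin Sxp)
    (hPyn : Pyn = Submodule.map f2n.transpose.mulVecLin Pzn ⊔
      Submodule.map gn.transpose.mulVecLin Sxn) :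
    (Fx.compose Fy f1p f2p gp f1n f2n gn).Shape ν Szp Szn Pzp Pzn ↔
      (Fx.Shape ν Sxp Sxn Pxp Pxn ∧ Fy.Shape ν Syp Syn Pyp Pyn) := by
  set Fz := Fx.compose Fy f1p f2p gp f1n f2n gn with hFzdef
  have hdW' := Set.disjoint_left.mp hdW
  have hdC' := Set.disjoint_left.mp hdC
  have hVW : Fz.VW = Fx.VW ∪ Fy.VW := by rw [hFzdef]; rfl
  have hVC : Fz.VC = Fx.VC ∪ Fy.VC := by rw [hFzdef]; rfl
  have hposz : ∀ w c, Fz.pos w c ↔ (Fx.pos w c ∨ Fy.pos w c ∨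
      (w ∈ Fx.VW ∧ c ∈ Fy.VC ∧ dotp (Fx.labWp w) (gp.mulVec (Fy.labCp c)) = 1) ∨
      (c ∈ Fx.VC ∧ w ∈ Fy.VW ∧ dotp (Fx.labCp c) (gp.mulVec (Fy.labWp w)) = 1)) := by
    rw [hFzdef]; exact fun _ _ => Iff.rfl
  have hnegz : ∀ w c, Fz.neg w c ↔ (Fx.neg w c ∨ Fy.neg w c ∨
      (w ∈ Fx.VW ∧ c ∈ Fy.VC ∧ dotp (Fx.labWn w) (gn.mulVec (Fy.labCn c)) = 1) ∨
      (c ∈ Fx.VC ∧ w ∈ Fy.VW ∧ dotp (Fx.labCn c) (gn.mulVec (Fy.labWn w)) = 1)) := by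
    rw [hFzdef]; exact fun _ _ => Iff.rfl
  have hIzp : Szp = Submodule.span (ZMod 2) (Fz.labWp '' {w | w ∈ Fz.VW ∧ ν w = true}) := by
    rw [hFzdef, hSzp, hSxp, hSyp]
    exact (span_compose Fx.VW Fy.VW hdW Fx.labWp Fy.labWp f1p f2p (fun w => ν w = true)).symm
  have hIzn : Szn = Submodule.span (ZMod 2) (Fz.labWn '' {w | w ∈ Fz.VW ∧ ν w = false}) := by
    rw [hFzdef, hSzn, hSxn, hSyn]
    exact (span_compose Fx.VW Fy.VW hdW Fx.labWn Fy.labWn f1n f2n (fun w => ν w = false)).symm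
  have keyx : ∀ c ∈ Fx.VC,
      (((∃ w ∈ Fz.VW, ν w = true ∧ Fz.pos w c) ∨
        (∃ w ∈ Fz.VW, ν w = false ∧ Fz.neg w c) ∨
        (∃ v ∈ Pzp, dotp (Fz.labCp c) v = 1) ∨
        (∃ v ∈ Pzn, dotp (Fz.labCn c) v = 1)) ↔
       ((∃ w ∈ Fx.VW, ν w = true ∧ Fx.pos w c) ∨
        (∃ w ∈ Fx.VW, ν w = false ∧ Fx.neg w c) ∨
        (∃ v ∈ Pxp, dotp (Fx.labCp c) v = 1) ∨
        (∃ v ∈ Pxn, dotp (Fx.labCn c) v = 1))) := by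
    intro c hc
    have hcy : c ∉ Fy.VC := hdC' hc
    have hlp : Fz.labCp c = f1p.mulVec (Fx.labCp c) := by rw [hFzdef]; exact if_pos hc
    have hln : Fz.labCn c = f1n.mulVec (Fx.labCn c) := by rw [hFzdef]; exact if_pos hc
    have hpos : (∃ w ∈ Fz.VW, ν w = true ∧ Fz.pos w c) ↔
        ((∃ w ∈ Fx.VW, ν w = true ∧ Fx.pos w c) ∨
         (∃ w ∈ Fy.VW, ν w = true ∧ dotp (Fx.labCp c) (gp.mulVec (Fy.labWp w)) = 1)) := by
      constructor
      · rintro ⟨w, hw, hν, hp⟩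
        rcases (hposz w c).mp hp with h | h | ⟨_, hcy', _⟩ | ⟨_, hwy, hdot⟩
        · exact Or.inl ⟨w, ((hx w c).1 h).2.1, hν, h⟩
        · exact absurd ((hy w c).1 h).2.2 hcy
        · exact absurd hcy' hcy
        · exact Or.inr ⟨w, hwy, hν, hdot⟩
      · rintro (⟨w, hw, hν, hp⟩ | ⟨w, hw, hν, hdot⟩)
        · exact ⟨w, by rw [hVW]; exact Or.inl hw, hν, (hposz w c).mpr (Or.inl hp)⟩
        · exact ⟨w, by rw [hVW]; exact Or.inr hw, hν,
            (hposz w c).mpr (Or.inr (Or.inr (Or.inr ⟨hc, hw, hdot⟩)))⟩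
    have hneg : (∃ w ∈ Fz.VW, ν w = false ∧ Fz.neg w c) ↔
        ((∃ w ∈ Fx.VW, ν w = false ∧ Fx.neg w c) ∨
         (∃ w ∈ Fy.VW, ν w = false ∧ dotp (Fx.labCn c) (gn.mulVec (Fy.labWn w)) = 1)) := by
      constructor
      · rintro ⟨w, hw, hν, hp⟩
        rcases (hnegz w c).mp hp with h | h | ⟨_, hcy', _⟩ | ⟨_, hwy, hdot⟩
        · exact Or.inl ⟨w, ((hx w c).2 h).2.1, hν, h⟩
        · exact absurd ((hy w c).2 h).2.2 hcy
        · exact absurd hcy' hcy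
        · exact Or.inr ⟨w, hwy, hν, hdot⟩
      · rintro (⟨w, hw, hν, hp⟩ | ⟨w, hw, hν, hdot⟩)
        · exact ⟨w, by rw [hVW]; exact Or.inl hw, hν, (hnegz w c).mpr (Or.inl hp)⟩
        · exact ⟨w, by rw [hVW]; exact Or.inr hw, hν,
            (hnegz w c).mpr (Or.inr (Or.inr (Or.inr ⟨hc, hw, hdot⟩)))⟩
    have hPp : (∃ v ∈ Pzp, dotp (Fz.labCp c) v = 1) ↔
        (∃ v ∈ Submodule.map f1p.transpose.mulVecLin Pzp, dotp (Fx.labCp c) v = 1) := by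
      rw [hlp, exists_map', Matrix.transpose_transpose]
    have hPn : (∃ v ∈ Pzn, dotp (Fz.labCn c) v = 1) ↔
        (∃ v ∈ Submodule.map f1n.transpose.mulVecLin Pzn, dotp (Fx.labCn c) v = 1) := by
      rw [hln, exists_map', Matrix.transpose_transpose]
    have hGp : (∃ v ∈ Submodule.map gp.mulVecLin Syp, dotp (Fx.labCp c) v = 1) ↔
        (∃ w ∈ Fy.VW, ν w = true ∧ dotp (Fx.labCp c) (gp.mulVec (Fy.labWp w)) = 1) := by
      rw [hSyp, exists_map_span]
      constructor
      · rintro ⟨s, ⟨w, ⟨hw, hν⟩, rfl⟩, h1⟩; exact ⟨w, hw, hν, h1⟩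
      · rintro ⟨w, hw, hν, h1⟩; exact ⟨Fy.labWp w, ⟨w, ⟨hw, hν⟩, rfl⟩, h1⟩
    have hGn : (∃ v ∈ Submodule.map gn.mulVecLin Syn, dotp (Fx.labCn c) v = 1) ↔
        (∃ w ∈ Fy.VW, ν w = false ∧ dotp (Fx.labCn c) (gn.mulVec (Fy.labWn w)) = 1) := by
      rw [hSyn, exists_map_span]
      constructor
      · rintro ⟨s, ⟨w, ⟨hw, hν⟩, rfl⟩, h1⟩; exact ⟨w, hw, hν, h1⟩
      · rintro ⟨w, hw, hν, h1⟩; exact ⟨Fy.labWn w, ⟨w, ⟨hw, hν⟩, rfl⟩, h1⟩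
    rw [hpos, hneg, hPp, hPn, hPxp, hPxn, exists_sup, exists_sup, hGp, hGn]
    constructor
    · rintro ((h|h)|(h|h)|h|h)
      · exact Or.inl h
      · exact Or.inr (Or.inr (Or.inl (Or.inr h)))
      · exact Or.inr (Or.inl h)
      · exact Or.inr (Or.inr (Or.inr (Or.inr h)))
      · exact Or.inr (Or.inr (Or.inl (Or.inl h)))
      · exact Or.inr (Or.inr (Or.inr (Or.inl h)))
    · rintro (h|h|(h|h)|(h|h))
      · exact Or.inl (Or.inl h)
      · exact Or.inr (Or.inl (Or.inl h))
      · exact Or.inr (Or.inr (Or.inl h))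
      · exact Or.inl (Or.inr h)
      · exact Or.inr (Or.inr (Or.inr h))
      · exact Or.inr (Or.inl (Or.inr h))
  have keyy : ∀ c ∈ Fy.VC,
      (((∃ w ∈ Fz.VW, ν w = true ∧ Fz.pos w c) ∨
        (∃ w ∈ Fz.VW, ν w = false ∧ Fz.neg w c) ∨
        (∃ v ∈ Pzp, dotp (Fz.labCp c) v = 1) ∨
        (∃ v ∈ Pzn, dotp (Fz.labCn c) v = 1)) ↔
       ((∃ w ∈ Fy.VW, ν w = true ∧ Fy.pos w c) ∨
        (∃ w ∈ Fy.VW, ν w = false ∧ Fy.neg w c) ∨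
        (∃ v ∈ Pyp, dotp (Fy.labCp c) v = 1) ∨
        (∃ v ∈ Pyn, dotp (Fy.labCn c) v = 1))) := by
    intro c hc
    have hcx : c ∉ Fx.VC := fun h => hdC' h hc
    have hlp : Fz.labCp c = f2p.mulVec (Fy.labCp c) := by rw [hFzdef]; exact if_neg hcx
    have hln : Fz.labCn c = f2n.mulVec (Fy.labCn c) := by rw [hFzdef]; exact if_neg hcx
    have hpos : (∃ w ∈ Fz.VW, ν w = true ∧ Fz.pos w c) ↔
        ((∃ w ∈ Fy.VW, ν w = true ∧ Fy.pos w c) ∨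
         (∃ w ∈ Fx.VW, ν w = true ∧ dotp (Fx.labWp w) (gp.mulVec (Fy.labCp c)) = 1)) := by
      constructor
      · rintro ⟨w, hw, hν, hp⟩
        rcases (hposz w c).mp hp with h | h | ⟨hwx, _, hdot⟩ | ⟨hcx', _, _⟩
        · exact absurd ((hx w c).1 h).2.2 hcx
        · exact Or.inl ⟨w, ((hy w c).1 h).2.1, hν, h⟩
        · exact Or.inr ⟨w, hwx, hν, hdot⟩
        · exact absurd hcx' hcx
      · rintro (⟨w, hw, hν, hp⟩ | ⟨w, hw, hν, hdot⟩)
        · exact ⟨w, by rw [hVW]; exact Or.inr hw, hν, (hposz w c).mpr (Or.inr (Or.inl hp))⟩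
        · exact ⟨w, by rw [hVW]; exact Or.inl hw, hν,
            (hposz w c).mpr (Or.inr (Or.inr (Or.inl ⟨hw, hc, hdot⟩)))⟩
    have hneg : (∃ w ∈ Fz.VW, ν w = false ∧ Fz.neg w c) ↔
        ((∃ w ∈ Fy.VW, ν w = false ∧ Fy.neg w c) ∨
         (∃ w ∈ Fx.VW, ν w = false ∧ dotp (Fx.labWn w) (gn.mulVec (Fy.labCn c)) = 1)) := by
      constructor
      · rintro ⟨w, hw, hν, hp⟩
        rcases (hnegz w c).mp hp with h | h | ⟨hwx, _, hdot⟩ | ⟨hcx', _, _⟩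
        · exact absurd ((hx w c).2 h).2.2 hcx
        · exact Or.inl ⟨w, ((hy w c).2 h).2.1, hν, h⟩
        · exact Or.inr ⟨w, hwx, hν, hdot⟩
        · exact absurd hcx' hcx
      · rintro (⟨w, hw, hν, hp⟩ | ⟨w, hw, hν, hdot⟩)
        · exact ⟨w, by rw [hVW]; exact Or.inr hw, hν, (hnegz w c).mpr (Or.inr (Or.inl hp))⟩
        · exact ⟨w, by rw [hVW]; exact Or.inl hw, hν,
            (hnegz w c).mpr (Or.inr (Or.inr (Or.inl ⟨hw, hc, hdot⟩)))⟩
    have hPp : (∃ v ∈ Pzp, dotp (Fz.labCp c) v = 1) ↔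
        (∃ v ∈ Submodule.map f2p.transpose.mulVecLin Pzp, dotp (Fy.labCp c) v = 1) := by
      rw [hlp, exists_map', Matrix.transpose_transpose]
    have hPn : (∃ v ∈ Pzn, dotp (Fz.labCn c) v = 1) ↔
        (∃ v ∈ Submodule.map f2n.transpose.mulVecLin Pzn, dotp (Fy.labCn c) v = 1) := by
      rw [hln, exists_map', Matrix.transpose_transpose]
    have hGp : (∃ v ∈ Submodule.map gp.transpose.mulVecLin Sxp, dotp (Fy.labCp c) v = 1) ↔
        (∃ w ∈ Fx.VW, ν w = true ∧ dotp (Fx.labWp w) (gp.mulVec (Fy.labCp c)) = 1) := by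
      rw [hSxp, exists_map_span]
      constructor
      · rintro ⟨s, ⟨w, ⟨hw, hν⟩, rfl⟩, h1⟩
        exact ⟨w, hw, hν, by rwa [dotp_transpose_swap] at h1⟩
      · rintro ⟨w, hw, hν, h1⟩
        exact ⟨Fx.labWp w, ⟨w, ⟨hw, hν⟩, rfl⟩, by rwa [dotp_transpose_swap]⟩
    have hGn : (∃ v ∈ Submodule.map gn.transpose.mulVecLin Sxn, dotp (Fy.labCn c) v = 1) ↔
        (∃ w ∈ Fx.VW, ν w = false ∧ dotp (Fx.labWn w) (gn.mulVec (Fy.labCn c)) = 1) := by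
      rw [hSxn, exists_map_span]
      constructor
      · rintro ⟨s, ⟨w, ⟨hw, hν⟩, rfl⟩, h1⟩
        exact ⟨w, hw, hν, by rwa [dotp_transpose_swap] at h1⟩
      · rintro ⟨w, hw, hν, h1⟩
        exact ⟨Fx.labWn w, ⟨w, ⟨hw, hν⟩, rfl⟩, by rwa [dotp_transpose_swap]⟩
    rw [hpos, hneg, hPp, hPn, hPyp, hPyn, exists_sup, exists_sup, hGp, hGn]
    constructor
    · rintro ((h|h)|(h|h)|h|h)
      · exact Or.inl h
      · exact Or.inr (Or.inr (Or.inl (Or.inr h)))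
      · exact Or.inr (Or.inl h)
      · exact Or.inr (Or.inr (Or.inr (Or.inr h)))
      · exact Or.inr (Or.inr (Or.inl (Or.inl h)))
      · exact Or.inr (Or.inr (Or.inr (Or.inl h)))
    · rintro (h|h|(h|h)|(h|h))
      · exact Or.inl (Or.inl h)
      · exact Or.inr (Or.inl (Or.inl h))
      · exact Or.inr (Or.inr (Or.inl h))
      · exact Or.inl (Or.inr h)
      · exact Or.inr (Or.inr (Or.inr h))
      · exact Or.inr (Or.inl (Or.inr h))
  simp only [LabSub.Shape]
  constructor
  · rintro ⟨-, -, hcl⟩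
    refine ⟨⟨hSxp, hSxn, fun c hc => (keyx c hc).mp (hcl c ?_)⟩,
            ⟨hSyp, hSyn, fun c hc => (keyy c hc).mp (hcl c ?_)⟩⟩
    · rw [hVC]; exact Or.inl hc
    · rw [hVC]; exact Or.inr hc
  · rintro ⟨⟨-, -, hclx⟩, -, -, hcly⟩
    refine ⟨hIzp, hIzn, fun c hc => ?_⟩
    rw [hVC] at hc
    rcases hc with hc | hc
    · exact (keyx c hc).mpr (hclx c hc)
    · exact (keyy c hc).mpr (hcly c hc)
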